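/- arXiv:2102.08966 — 4 statements merged into one kernel-verified Lean document; each statement's English description precedes it below -/
import Mathlib

section
/- Let Ω be a finite nonempty set with a probability distribution P (nonnegative weights summing to 1, with P extended additively to subsets). Let P_A and P_B be partitions of Ω such that every nonempty intersection of a cell of P_A with a cell of P_B has positive probability, and let E_A, E_B ⊆ Ω be events with P(E_A \ E_B) = P(E_B \ E_A) = 0 (perfectly correlated events). Fix q_A, q_B ∈ [0,1] and define A₀ = {ω ∈ Ω : P(E_B ∩ P_A(ω)) = q_A·P(P_A(ω))}, B₀ = {ω ∈ Ω : P(E_A ∩ P_B(ω)) = q_B·P(P_B(ω))}, and recursively A_{n+1} = {ω ∈ A_n : P(B_n ∩ P_A(ω)) = P(P_A(ω))}, B_{n+1} = {ω ∈ B_n : P(A_n ∩ P_B(ω)) = P(P_B(ω))}, where P_A(ω) (respectively P_B(ω)) denotes the cell of P_A (respectively P_B) containing ω. If there exists ω* ∈ Ω such that ω* ∈ A_n ∩ B_n for every n ∈ ℕ, then q_A = q_B. -/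
open Classical in
/-- The probability of a set of states of the world: the sum of the weights of its
elements. -/
noncomputable def Pr {Ω : Type*} [Fintype Ω] (P : Ω → ℝ) (S : Set Ω) : ℝ :=
  ∑ ω, if ω ∈ S then P ω else 0

/-- `cell` assigns to each state the cell of a partition of `Ω` containing it. -/
def IsPartitionMap {Ω : Type*} (cell : Ω → Set Ω) : Prop :=
  (∀ ω, ω ∈ cell ω) ∧ (∀ ω ω', ω' ∈ cell ω → cell ω' = cell ω)

/-- The hierarchy `(A_n, B_n)`: at stage `0`, the states where Alice assigns conditional
probability `qA` to `EB` (resp. Bob assigns `qB` to `EA`) given her (his) partition cell;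
at stage `n+1`, additionally each agent is certain that the state lies in the other's
stage-`n` set. -/
noncomputable def ABsets {Ω : Type*} [Fintype Ω] (P : Ω → ℝ)
    (cellA cellB : Ω → Set Ω) (EA EB : Set Ω) (qA qB : ℝ) :
    ℕ → Set Ω × Set Ω
  | 0 =>
      ({ω | Pr P (EB ∩ cellA ω) = qA * Pr P (cellA ω)},
       {ω | Pr P (EA ∩ cellB ω) = qB * Pr P (cellB ω)})
  | n + 1 =>
      ({ω | ω ∈ (ABsets P cellA cellB EA EB qA qB n).1 ∧
            Pr P ((ABsets P cellA cellB EA EB qA qB n).2 ∩ cellA ω) = Pr P (cellA ω)},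
       {ω | ω ∈ (ABsets P cellA cellB EA EB qA qB n).2 ∧
            Pr P ((ABsets P cellA cellB EA EB qA qB n).1 ∩ cellB ω) = Pr P (cellB ω)})

section PrLemmas

open Classical

variable {Ω : Type*} [Fintype Ω] {P : Ω → ℝ}

lemma Pr_empty : Pr P (∅ : Set Ω) = 0 := by
  unfold Pr; simp

lemma Pr_nonneg (hP0 : ∀ ω, 0 ≤ P ω) (S : Set Ω) : 0 ≤ Pr P S := by
  unfold Pr
  apply Finset.sum_nonneg
  intro ω _
  split_ifs
  · exact hP0 ω
  · exact le_rfl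

lemma Pr_mono (hP0 : ∀ ω, 0 ≤ P ω) {S T : Set Ω} (h : S ⊆ T) : Pr P S ≤ Pr P T := by
  unfold Pr
  apply Finset.sum_le_sum
  intro ω _
  split_ifs with h1 h2
  · exact le_rfl
  · exact absurd (h h1) h2
  · exact hP0 ω
  · exact le_rfl

lemma Pr_inter_add_diff (S T : Set Ω) : Pr P (S ∩ T) + Pr P (S \ T) = Pr P S := by
  unfold Pr
  rw [← Finset.sum_add_distrib]
  apply Finset.sum_congr rfl
  intro ω _
  by_cases h1 : ω ∈ S <;> by_cases h2 : ω ∈ T <;>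
    simp [Set.mem_inter_iff, Set.mem_diff, h1, h2]

lemma Pr_union_disjoint {S T : Set Ω} (h : Disjoint S T) :
    Pr P (S ∪ T) = Pr P S + Pr P T := by
  unfold Pr
  rw [← Finset.sum_add_distrib]
  apply Finset.sum_congr rfl
  intro ω _
  by_cases h1 : ω ∈ S <;> by_cases h2 : ω ∈ T
  · exact absurd (Set.mem_inter h1 h2) (by rw [Set.disjoint_iff_inter_eq_empty] at h; simp [h])
  all_goals simp [Set.mem_union, h1, h2]

lemma Pr_cell_sum {cell : Ω → Set Ω} (hpart : IsPartitionMap cell) (E : Set Ω) (q : ℝ) :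
    ∀ (n : ℕ) (C : Set Ω), C.ncard ≤ n →
      (∀ ω ∈ C, cell ω ⊆ C) →
      (∀ ω ∈ C, Pr P (E ∩ cell ω) = q * Pr P (cell ω)) →
      Pr P (E ∩ C) = q * Pr P C := by
  intro n
  induction n with
  | zero =>
    intro C hcard _ _
    have : C = ∅ := by
      rw [← Set.ncard_eq_zero C.toFinite]
      omega
    simp [this, Pr_empty]
  | succ n ih =>
    intro C hcard hmeas hcond
    rcases C.eq_empty_or_nonempty with hC | ⟨ω, hω⟩
    · simp [hC, Pr_empty]
    · set C' := C \ cell ω with hC'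
      have hcell : cell ω ⊆ C := hmeas ω hω
      have hCeq : cell ω ∪ C' = C := Set.union_diff_cancel hcell
      have hdisj : Disjoint (cell ω) C' := Set.disjoint_sdiff_right
      have hss : C' ⊂ C := ⟨Set.diff_subset, fun hsub => (hsub hω).2 (hpart.1 ω)⟩
      have hcard' : C'.ncard ≤ n := by
        have := Set.ncard_lt_ncard hss C.toFinite
        omega
      have hmeas' : ∀ ω' ∈ C', cell ω' ⊆ C' := by
        intro ω' hω' x hx
        have hxC : x ∈ C := hmeas ω' hω'.1 hx
        refine ⟨hxC, fun hxcell => ?_⟩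
        have h1 : cell x = cell ω := hpart.2 ω x hxcell
        have h2 : cell x = cell ω' := hpart.2 ω' x hx
        refine hω'.2 ?_
        rw [← h1, h2]
        exact hpart.1 ω'
      have ihC' := ih C' hcard' hmeas' (fun ω' hω' => hcond ω' hω'.1)
      have hsplit1 : Pr P C = Pr P (cell ω) + Pr P C' := by
        rw [← hCeq, Pr_union_disjoint hdisj]
      have hsplit2 : Pr P (E ∩ C) = Pr P (E ∩ cell ω) + Pr P (E ∩ C') := by
        rw [← hCeq, Set.inter_union_distrib_left,
          Pr_union_disjoint (hdisj.mono Set.inter_subset_right Set.inter_subset_right)]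
      rw [hsplit1, hsplit2, ihC', hcond ω hω]
      ring

end PrLemmas


section ABLemmas

variable {Ω : Type*} [Fintype Ω] (P : Ω → ℝ) (cellA cellB : Ω → Set Ω)
  (EA EB : Set Ω) (qA qB : ℝ)

lemma ABsets_succ_subset_fst (n : ℕ) :
    (ABsets P cellA cellB EA EB qA qB (n + 1)).1 ⊆ (ABsets P cellA cellB EA EB qA qB n).1 :=
  fun _ h => h.1

lemma ABsets_succ_subset_snd (n : ℕ) :
    (ABsets P cellA cellB EA EB qA qB (n + 1)).2 ⊆ (ABsets P cellA cellB EA EB qA qB n).2 :=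
  fun _ h => h.1

lemma ABsets_antitone_fst {m n : ℕ} (h : m ≤ n) :
    (ABsets P cellA cellB EA EB qA qB n).1 ⊆ (ABsets P cellA cellB EA EB qA qB m).1 := by
  induction h with
  | refl => exact subset_rfl
  | step _ ih => exact fun x hx => ih (ABsets_succ_subset_fst P cellA cellB EA EB qA qB _ hx)

lemma ABsets_antitone_snd {m n : ℕ} (h : m ≤ n) :
    (ABsets P cellA cellB EA EB qA qB n).2 ⊆ (ABsets P cellA cellB EA EB qA qB m).2 := by
  induction h with
  | refl => exact subset_rfl
  | step _ ih => exact fun x hx => ih (ABsets_succ_subset_snd P cellA cellB EA EB qA qB _ hx)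

lemma ABsets_measA (hpartA : IsPartitionMap cellA) (n : ℕ) {ω ω' : Ω}
    (h : ω' ∈ cellA ω) :
    ω' ∈ (ABsets P cellA cellB EA EB qA qB n).1 ↔
      ω ∈ (ABsets P cellA cellB EA EB qA qB n).1 := by
  have hc : cellA ω' = cellA ω := hpartA.2 ω ω' h
  induction n with
  | zero => simp [ABsets, hc]
  | succ n ih => simp [ABsets, hc, ih]

lemma ABsets_measB (hpartB : IsPartitionMap cellB) (n : ℕ) {ω ω' : Ω}
    (h : ω' ∈ cellB ω) :
    ω' ∈ (ABsets P cellA cellB EA EB qA qB n).2 ↔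
      ω ∈ (ABsets P cellA cellB EA EB qA qB n).2 := by
  have hc : cellB ω' = cellB ω := hpartB.2 ω ω' h
  induction n with
  | zero => simp [ABsets, hc]
  | succ n ih => simp [ABsets, hc, ih]

end ABLemmas

/-- If `S` is measurable w.r.t. `cellY` and the conditional probability of `S` given
`cellX ω` is one, then `cellX ω ⊆ S`. -/
lemma cell_subset_of_Pr_eq {Ω : Type*} [Fintype Ω] {P : Ω → ℝ} (hP0 : ∀ ω, 0 ≤ P ω)
    {cellX cellY : Ω → Set Ω} (hpartY : IsPartitionMap cellY)
    (hjoin : ∀ ω ω', (cellX ω ∩ cellY ω').Nonempty → 0 < Pr P (cellX ω ∩ cellY ω'))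
    {S : Set Ω} (hSmeas : ∀ ω ∈ S, cellY ω ⊆ S) {ω : Ω}
    (h : Pr P (S ∩ cellX ω) = Pr P (cellX ω)) : cellX ω ⊆ S := by
  intro ω' hω'
  by_contra hns
  have hsub : cellX ω ∩ cellY ω' ⊆ cellX ω \ S := by
    rintro x ⟨hxA, hxB⟩
    refine ⟨hxA, fun hxS => hns ?_⟩
    have hcx : cellY x = cellY ω' := hpartY.2 ω' x hxB
    exact hSmeas x hxS (hcx ▸ hpartY.1 ω')
  have hpos : 0 < Pr P (cellX ω ∩ cellY ω') :=
    hjoin ω ω' ⟨ω', hω', hpartY.1 ω'⟩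
  have h1 : Pr P (cellX ω ∩ S) + Pr P (cellX ω \ S) = Pr P (cellX ω) :=
    Pr_inter_add_diff _ _
  have h2 : Pr P (cellX ω ∩ S) = Pr P (S ∩ cellX ω) := by rw [Set.inter_comm]
  have h3 : Pr P (cellX ω ∩ cellY ω') ≤ Pr P (cellX ω \ S) := Pr_mono hP0 hsub
  linarith


/-- Aumann's classical agreement theorem (Theorem 1 of the paper): if it is common
certainty at some state `ω*` that Alice assigns probability `qA` to `EB` and Bob assigns
probability `qB` to `EA`, where `EA` and `EB` are perfectly correlated events, then
`qA = qB`. -/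
theorem classical_agreement_theorem
    {Ω : Type*} [Fintype Ω] [Nonempty Ω]
    (P : Ω → ℝ) (hP0 : ∀ ω, 0 ≤ P ω) (hP1 : (∑ ω, P ω) = 1)
    (cellA cellB : Ω → Set Ω)
    (hpartA : IsPartitionMap cellA) (hpartB : IsPartitionMap cellB)
    (hjoin : ∀ ω ω', (cellA ω ∩ cellB ω').Nonempty → 0 < Pr P (cellA ω ∩ cellB ω'))
    (EA EB : Set Ω)
    (hcorr1 : Pr P (EA \ EB) = 0) (hcorr2 : Pr P (EB \ EA) = 0)
    (qA qB : ℝ) (hqA : qA ∈ Set.Icc (0:ℝ) 1) (hqB : qB ∈ Set.Icc (0:ℝ) 1)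
    (ωstar : Ω)
    (hcc : ∀ n : ℕ, ωstar ∈ (ABsets P cellA cellB EA EB qA qB n).1 ∩
                             (ABsets P cellA cellB EA EB qA qB n).2) :
    qA = qB := by
  set AB := ABsets P cellA cellB EA EB qA qB with hABdef
  -- Stabilization of the decreasing sequence of pairs of sets
  have hstab : ∃ N, AB (N + 1) = AB N := by
    obtain ⟨m, n, hne, heq⟩ := Finite.exists_ne_map_eq_of_infinite AB
    rcases hne.lt_or_gt with hlt | hlt
    · refine ⟨m, Prod.ext ?_ ?_⟩
      · refine subset_antisymm (ABsets_succ_subset_fst P cellA cellB EA EB qA qB m) ?_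
        have h1 : (AB n).1 ⊆ (AB (m + 1)).1 :=
          ABsets_antitone_fst P cellA cellB EA EB qA qB hlt
        have h2 : (AB m).1 = (AB n).1 := congrArg Prod.fst heq
        rw [h2]; exact h1
      · refine subset_antisymm (ABsets_succ_subset_snd P cellA cellB EA EB qA qB m) ?_
        have h1 : (AB n).2 ⊆ (AB (m + 1)).2 :=
          ABsets_antitone_snd P cellA cellB EA EB qA qB hlt
        have h2 : (AB m).2 = (AB n).2 := congrArg Prod.snd heq
        rw [h2]; exact h1
    · refine ⟨n, Prod.ext ?_ ?_⟩
      · refine subset_antisymm (ABsets_succ_subset_fst P cellA cellB EA EB qA qB n) ?_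
        have h1 : (AB m).1 ⊆ (AB (n + 1)).1 :=
          ABsets_antitone_fst P cellA cellB EA EB qA qB hlt
        have h2 : (AB n).1 = (AB m).1 := (congrArg Prod.fst heq).symm
        rw [h2]; exact h1
      · refine subset_antisymm (ABsets_succ_subset_snd P cellA cellB EA EB qA qB n) ?_
        have h1 : (AB m).2 ⊆ (AB (n + 1)).2 :=
          ABsets_antitone_snd P cellA cellB EA EB qA qB hlt
        have h2 : (AB n).2 = (AB m).2 := (congrArg Prod.snd heq).symm
        rw [h2]; exact h1
  obtain ⟨N, hN⟩ := hstab
  set A := (AB N).1 with hAdef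
  set B := (AB N).2 with hBdef
  -- Measurability of A and B w.r.t. the respective partitions
  have hAmeas : ∀ ω ∈ A, cellA ω ⊆ A := by
    intro ω hω ω' hω'
    exact (ABsets_measA P cellA cellB EA EB qA qB hpartA N hω').mpr hω
  have hBmeas : ∀ ω ∈ B, cellB ω ⊆ B := by
    intro ω hω ω' hω'
    exact (ABsets_measB P cellA cellB EA EB qA qB hpartB N hω').mpr hω
  -- the join condition with roles of the partitions swapped
  have hjoin' : ∀ ω ω', (cellB ω ∩ cellA ω').Nonempty → 0 < Pr P (cellB ω ∩ cellA ω') := by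
    intro ω ω' hne
    rw [Set.inter_comm]
    rw [Set.inter_comm] at hne
    exact hjoin ω' ω hne
  -- certainty at the fixed point implies cell inclusion
  have hAB : ∀ ω ∈ A, cellA ω ⊆ B := by
    intro ω hω
    have hω' : ω ∈ (AB (N + 1)).1 := by rw [hN]; exact hω
    have h2 : Pr P (B ∩ cellA ω) = Pr P (cellA ω) := by
      have := hω'
      simp only [hABdef, ABsets, Set.mem_setOf_eq] at this
      exact this.2
    exact cell_subset_of_Pr_eq hP0 hpartB hjoin hBmeas h2
  have hBA : ∀ ω ∈ B, cellB ω ⊆ A := by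
    intro ω hω
    have hω' : ω ∈ (AB (N + 1)).2 := by rw [hN]; exact hω
    have h2 : Pr P (A ∩ cellB ω) = Pr P (cellB ω) := by
      have := hω'
      simp only [hABdef, ABsets, Set.mem_setOf_eq] at this
      exact this.2
    exact cell_subset_of_Pr_eq hP0 hpartA hjoin' hAmeas h2
  have hABeq : A = B :=
    subset_antisymm (fun ω h => hAB ω h (hpartA.1 ω)) (fun ω h => hBA ω h (hpartB.1 ω))
  -- the common set C and its properties
  set C := A with hCdef
  have hCmeasA : ∀ ω ∈ C, cellA ω ⊆ C := by
    intro ω hω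
    rw [hABeq] at hω ⊢
    exact fun x hx => hABeq ▸ hAB ω (hABeq ▸ hω) hx
  have hCmeasB : ∀ ω ∈ C, cellB ω ⊆ C := by
    intro ω hω
    exact hBA ω (hABeq ▸ hω)
  have hcondA : ∀ ω ∈ C, Pr P (EB ∩ cellA ω) = qA * Pr P (cellA ω) := by
    intro ω hω
    have h0 : ω ∈ (AB 0).1 :=
      ABsets_antitone_fst P cellA cellB EA EB qA qB (Nat.zero_le N) hω
    simpa only [hABdef, ABsets, Set.mem_setOf_eq] using h0
  have hcondB : ∀ ω ∈ C, Pr P (EA ∩ cellB ω) = qB * Pr P (cellB ω) := by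
    intro ω hω
    have h0 : ω ∈ (AB 0).2 :=
      ABsets_antitone_snd P cellA cellB EA EB qA qB (Nat.zero_le N) (hAB ω hω (hpartA.1 ω))
    simpa only [hABdef, ABsets, Set.mem_setOf_eq] using h0
  have hEBC : Pr P (EB ∩ C) = qA * Pr P C :=
    Pr_cell_sum hpartA EB qA C.ncard C le_rfl hCmeasA hcondA
  have hEAC : Pr P (EA ∩ C) = qB * Pr P C :=
    Pr_cell_sum hpartB EA qB C.ncard C le_rfl hCmeasB hcondB
  -- perfectly correlated events have equal probability on C
  have d1 : Pr P ((EA ∩ C) \ EB) = 0 := by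
    have hsub : (EA ∩ C) \ EB ⊆ EA \ EB := fun x hx => ⟨hx.1.1, hx.2⟩
    have := Pr_mono hP0 hsub
    have := Pr_nonneg hP0 ((EA ∩ C) \ EB)
    linarith
  have d2 : Pr P ((EB ∩ C) \ EA) = 0 := by
    have hsub : (EB ∩ C) \ EA ⊆ EB \ EA := fun x hx => ⟨hx.1.1, hx.2⟩
    have := Pr_mono hP0 hsub
    have := Pr_nonneg hP0 ((EB ∩ C) \ EA)
    linarith
  have e1 : Pr P ((EA ∩ C) ∩ EB) + Pr P ((EA ∩ C) \ EB) = Pr P (EA ∩ C) :=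
    Pr_inter_add_diff _ _
  have e2 : Pr P ((EB ∩ C) ∩ EA) + Pr P ((EB ∩ C) \ EA) = Pr P (EB ∩ C) :=
    Pr_inter_add_diff _ _
  have hsame : (EA ∩ C) ∩ EB = (EB ∩ C) ∩ EA := by
    ext x; simp only [Set.mem_inter_iff]; tauto
  have heqprob : Pr P (EA ∩ C) = Pr P (EB ∩ C) := by
    rw [hsame] at e1
    linarith
  -- positivity of Pr C
  have hCpos : 0 < Pr P C := by
    have hsub : cellA ωstar ∩ cellB ωstar ⊆ C := by
      have h1 : cellA ωstar ⊆ B := hAB ωstar (hcc N).1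
      intro x hx
      exact hBA x (h1 hx.1) (hpartB.1 x)
    have hpos : 0 < Pr P (cellA ωstar ∩ cellB ωstar) :=
      hjoin ωstar ωstar ⟨ωstar, hpartA.1 ωstar, hpartB.1 ωstar⟩
    calc (0:ℝ) < Pr P (cellA ωstar ∩ cellB ωstar) := hpos
      _ ≤ Pr P C := Pr_mono hP0 hsub
  have hfin : qA * Pr P C = qB * Pr P C := by
    rw [← hEBC, ← hEAC, heqprob]
  exact mul_right_cancel₀ (ne_of_gt hCpos) hfin
end

section
/- Let p be a two-input two-output no-signaling box with p(0,1|1,1) = p(1,0|1,1) = 0 (perfectly correlated outcomes on inputs x=y=1), and suppose Σ_b p(a,b|0,1) > 0 for both a ∈ {0,1}, Σ_a p(a,0|1,0) > 0, and Σ_b p(a,b|0,0) > 0 for both a ∈ {0,1}. Let q_A, q_B ∈ [0,1] be such that p(a,1|0,1) = q_A·Σ_b p(a,b|0,1) for both a = 0,1 (so α₀ = {0,1}), p(1,0|1,0) = q_B·Σ_a p(a,0|1,0), and suppose that for both a = 0,1 one has Σ_{b∈{0}} p(a,b|0,0) = Σ_b p(a,b|0,0) (i.e., both of Alice's outcomes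 make her certain that Bob's outcome on input y=0 lies in β = {0}). Then q_A = q_B. -/
open Kronecker ComplexOrder

/-- A (bipartite) box: nonnegative entries, normalized for every input pair. -/
def IsBox {nA nB nX nY : ℕ} (p : Fin nA → Fin nB → Fin nX → Fin nY → ℝ) : Prop :=
  (∀ a b x y, 0 ≤ p a b x y) ∧ (∀ x y, (∑ a, ∑ b, p a b x y) = 1)

/-- No-signaling: each party's marginal does not depend on the other's input. -/
def NoSignaling {nA nB nX nY : ℕ} (p : Fin nA → Fin nB → Fin nX → Fin nY → ℝ) : Prop :=
  (∀ b y x x', (∑ a, p a b x y) = ∑ a, p a b x' y) ∧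
  (∀ a x y y', (∑ b, p a b x y) = ∑ b, p a b x y')

/-- Local (classical) box: a convex mixture of product deterministic/stochastic strategies. -/
def IsLocal {nA nB nX nY : ℕ} (p : Fin nA → Fin nB → Fin nX → Fin nY → ℝ) : Prop :=
  ∃ (Λ : ℕ) (w : Fin Λ → ℝ) (pA : Fin nA → Fin nX → Fin Λ → ℝ)
    (pB : Fin nB → Fin nY → Fin Λ → ℝ),
    (∀ l, 0 ≤ w l) ∧ ((∑ l, w l) = 1) ∧
    (∀ a x l, 0 ≤ pA a x l) ∧ (∀ x l, (∑ a, pA a x l) = 1) ∧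
    (∀ b y l, 0 ≤ pB b y l) ∧ (∀ y l, (∑ b, pB b y l) = 1) ∧
    (∀ a b x y, p a b x y = ∑ l, w l * pA a x l * pB b y l)

/-- Quantum box: realized by POVMs on a bipartite quantum state. -/
def IsQuantum {nA nB nX nY : ℕ} (p : Fin nA → Fin nB → Fin nX → Fin nY → ℝ) : Prop :=
  ∃ (dA dB : ℕ) (_ : 0 < dA) (_ : 0 < dB)
    (ρ : Matrix (Fin dA × Fin dB) (Fin dA × Fin dB) ℂ)
    (E : Fin nX → Fin nA → Matrix (Fin dA) (Fin dA) ℂ)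
    (F : Fin nY → Fin nB → Matrix (Fin dB) (Fin dB) ℂ),
    ρ.PosSemidef ∧ ρ.trace = 1 ∧
    (∀ x a, (E x a).PosSemidef) ∧ (∀ x, (∑ a, E x a) = 1) ∧
    (∀ y b, (F y b).PosSemidef) ∧ (∀ y, (∑ b, F y b) = 1) ∧
    (∀ a b x y, ((E x a ⊗ₖ F y b) * ρ).trace = (p a b x y : ℂ))

open Classical in
/-- The certainty hierarchy `(α_n, β_n)` of the agreement framework:
`α₀` are Alice's outputs (on input `x = 0`) from which she assigns conditional
probability `qA` to Bob outputting `1` on input `y = 1`; `β₀` is the analogue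
for Bob; and at each later stage each party is moreover certain (on inputs
`x = y = 0`) that the other's output lies in the previous stage's set. -/
noncomputable def alphaBeta {nA nB nX nY : ℕ} [NeZero nA] [NeZero nB] [NeZero nX] [NeZero nY]
    (p : Fin nA → Fin nB → Fin nX → Fin nY → ℝ) (qA qB : ℝ) :
    ℕ → Set (Fin nA) × Set (Fin nB)
  | 0 =>
      ({a | 0 < (∑ b, p a b 0 1) ∧ p a 1 0 1 = qA * (∑ b, p a b 0 1)},
       {b | 0 < (∑ a, p a b 1 0) ∧ p 1 b 1 0 = qB * (∑ a, p a b 1 0)})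
  | n + 1 =>
      ({a | a ∈ (alphaBeta p qA qB n).1 ∧ 0 < (∑ b, p a b 0 0) ∧
            (∑ b, if b ∈ (alphaBeta p qA qB n).2 then p a b 0 0 else 0) = ∑ b, p a b 0 0},
       {b | b ∈ (alphaBeta p qA qB n).2 ∧ 0 < (∑ a, p a b 0 0) ∧
            (∑ a, if a ∈ (alphaBeta p qA qB n).1 then p a b 0 0 else 0) = ∑ a, p a b 0 0})

/-- The box gives rise to common certainty of disagreement: for some `qA ≠ qB` in `[0,1]`,
the outputs on inputs `x = y = 1` are perfectly correlated, the event
`(a,b,x,y) = (0,0,0,0)` has positive probability, and `0 ∈ α_n`, `0 ∈ β_n` for every `n`. -/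
def CommonCertaintyOfDisagreement {nA nB nX nY : ℕ}
    [NeZero nA] [NeZero nB] [NeZero nX] [NeZero nY]
    (p : Fin nA → Fin nB → Fin nX → Fin nY → ℝ) : Prop :=
  ∃ qA qB : ℝ, qA ∈ Set.Icc (0:ℝ) 1 ∧ qB ∈ Set.Icc (0:ℝ) 1 ∧ qA ≠ qB ∧
    (∀ (a : Fin nA) (b : Fin nB), (a : ℕ) ≠ (b : ℕ) → p a b 1 1 = 0) ∧ 0 < p 0 0 0 0 ∧
    (∀ n : ℕ, (0 : Fin nA) ∈ (alphaBeta p qA qB n).1 ∧ (0 : Fin nB) ∈ (alphaBeta p qA qB n).2)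

/-- The box gives rise to singular disagreement: perfectly correlated outputs on inputs
`x = y = 1`, positive probability of `(0,0,0,0)`, Alice assigns conditional probability
`qA = 1` to `b = 1` given `a = 0, x = 0, y = 1`, and Bob assigns conditional probability
`qB = 0` to `a = 1` given `b = 0, x = 1, y = 0`. -/
def SingularDisagreement {nA nB nX nY : ℕ}
    [NeZero nA] [NeZero nB] [NeZero nX] [NeZero nY]
    (p : Fin nA → Fin nB → Fin nX → Fin nY → ℝ) : Prop :=
  (∀ (a : Fin nA) (b : Fin nB), (a : ℕ) ≠ (b : ℕ) → p a b 1 1 = 0) ∧ 0 < p 0 0 0 0 ∧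
  (0 < ∑ b, p 0 b 0 1) ∧ (p 0 1 0 1 = ∑ b, p 0 b 0 1) ∧
  (0 < ∑ a, p a 0 1 0) ∧ (p 1 0 1 0 = 0)


/-- Case 2 of the proof of Theorem 3 of the paper: if `α₀ = {0,1}` and both of Alice's
outcomes make her certain (on inputs `x = y = 0`) that Bob's outcome is `0`, then
perfect correlation at inputs `x = y = 1` forces `qA = qB`. -/
theorem full_alpha_certain_beta_implies_agreement
    (p : Fin 2 → Fin 2 → Fin 2 → Fin 2 → ℝ)
    (hbox : IsBox p) (hns : NoSignaling p)
    (hpc1 : p 0 1 1 1 = 0) (hpc2 : p 1 0 1 1 = 0)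
    (hmA : ∀ a, 0 < ∑ b, p a b 0 1)
    (hmB : 0 < ∑ a, p a 0 1 0)
    (hm0 : ∀ a, 0 < ∑ b, p a b 0 0)
    (qA qB : ℝ) (hqA : qA ∈ Set.Icc (0:ℝ) 1) (hqB : qB ∈ Set.Icc (0:ℝ) 1)
    (hA : ∀ a, p a 1 0 1 = qA * (∑ b, p a b 0 1))
    (hB : p 1 0 1 0 = qB * (∑ a, p a 0 1 0))
    (hcert : ∀ a, p a 0 0 0 = ∑ b, p a b 0 0) :
    qA = qB := by
  obtain ⟨hpos, hnorm⟩ := hbox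
  obtain ⟨hnsA, hnsB⟩ := hns
  have h00 : ∀ a : Fin 2, p a 1 0 0 = 0 := by
    intro a
    have h := hcert a
    simp [Fin.sum_univ_two] at h
    linarith
  have hA10a : p 0 1 1 0 = 0 ∧ p 1 1 1 0 = 0 := by
    have h := hnsA 1 0 1 0
    simp [Fin.sum_univ_two, h00 0, h00 1] at h
    have h0 := hpos 0 1 1 0
    have h1 := hpos 1 1 1 0
    constructor <;> linarith
  have hsum10 : (∑ a, p a 0 1 0) = 1 := by
    have h := hnorm 1 0
    simp [Fin.sum_univ_two, hA10a.1, hA10a.2] at h ⊢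
    linarith
  have hqBval : p 1 0 1 0 = qB := by rw [hB, hsum10, mul_one]
  have key1 : p 1 1 1 1 = qB := by
    have h := hnsB 1 1 0 1
    simp [Fin.sum_univ_two, hqBval, hA10a.2, hpc2] at h
    linarith
  have key2 : p 1 1 1 1 = qA := by
    have h := hnsA 1 1 1 0
    have hn := hnorm 0 1
    have e0 := hA 0
    have e1 := hA 1
    simp [Fin.sum_univ_two, hpc1] at h hn e0 e1
    have hsum : (p 0 0 0 1 + p 0 1 0 1) + (p 1 0 0 1 + p 1 1 0 1) = 1 := by linarith
    have hq : p 0 1 0 1 + p 1 1 0 1 = qA := by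
      rw [e0, e1, ← mul_add, hsum, mul_one]
    linarith
  linarith
end

section
/- Let p be a two-input two-output quantum box and for x,y ∈ {0,1} define the correlators c_{xy} = p(0,0|x,y) + p(1,1|x,y) − p(0,1|x,y) − p(1,0|x,y). If c_{00} = 1 and c_{11} = 1, then c_{01} = c_{10}. In particular, a quantum box with p(0,1|0,0) = p(1,0|0,0) = 0 and p(0,1|1,1) = p(1,0|1,1) = 0 satisfies p(0,1|0,1) − p(0,1|1,0) = p(0,0|0,0) − p(0,0|1,1). -/
open Kronecker ComplexOrder

section Helpers
open Matrix
set_option linter.unusedSectionVars false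



set_option linter.unusedSectionVars false

variable {m n : Type*} [Fintype m] [Fintype n] [DecidableEq m] [DecidableEq n]

lemma kronCT (A : Matrix m m ℂ) (B : Matrix n n ℂ) : (A ⊗ₖ B)ᴴ = Aᴴ ⊗ₖ Bᴴ := by
  ext ⟨i, j⟩ ⟨k, l⟩
  simp [conjTranspose_apply, kroneckerMap_apply, mul_comm]

lemma subKron (A B : Matrix m m ℂ) (C : Matrix n n ℂ) :
    (A - B) ⊗ₖ C = A ⊗ₖ C - B ⊗ₖ C := by
  ext ⟨i, j⟩ ⟨k, l⟩
  simp [kroneckerMap_apply, sub_mul]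

lemma kronSub (A : Matrix m m ℂ) (B C : Matrix n n ℂ) :
    A ⊗ₖ (B - C) = A ⊗ₖ B - A ⊗ₖ C := by
  ext ⟨i, j⟩ ⟨k, l⟩
  simp [kroneckerMap_apply, mul_sub]

open scoped MatrixOrder in
noncomputable def Matrix.PosSemidef.sqrt {A : Matrix n n ℂ} (_hA : A.PosSemidef) :
    Matrix n n ℂ := CFC.sqrt A

open scoped MatrixOrder in
lemma Matrix.PosSemidef.sqrt_mul_self {A : Matrix n n ℂ} (hA : A.PosSemidef) :
    hA.sqrt * hA.sqrt = A := CFC.sqrt_mul_sqrt_self A hA.nonneg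

open scoped MatrixOrder in
lemma Matrix.PosSemidef.posSemidef_sqrt {A : Matrix n n ℂ} (hA : A.PosSemidef) :
    hA.sqrt.PosSemidef := (CFC.sqrt_nonneg A).posSemidef

lemma kronPSD {A : Matrix m m ℂ} {B : Matrix n n ℂ}
    (hA : A.PosSemidef) (hB : B.PosSemidef) : (A ⊗ₖ B).PosSemidef := by
  have key : hA.sqrt ⊗ₖ hB.sqrt * (hA.sqrt ⊗ₖ hB.sqrt) = A ⊗ₖ B := by
    rw [← Matrix.mul_kronecker_mul, hA.sqrt_mul_self, hB.sqrt_mul_self]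
  have key2 : A ⊗ₖ B = (hA.sqrt ⊗ₖ hB.sqrt)ᴴ * (hA.sqrt ⊗ₖ hB.sqrt) := by
    rw [kronCT, hA.posSemidef_sqrt.1, hB.posSemidef_sqrt.1, key]
  rw [key2]
  exact Matrix.posSemidef_conjTranspose_mul_self _

lemma psdTraceNonneg {A : Matrix n n ℂ} (hA : A.PosSemidef) : 0 ≤ A.trace := by
  exact hA.trace_nonneg

lemma traceCTmulself {A : Matrix m n ℂ} (h : (Aᴴ * A).trace = 0) : A = 0 := by
  have ht : (Aᴴ * A).trace = ((∑ j, ∑ i, Complex.normSq (A i j) : ℝ) : ℂ) := by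
    push_cast
    simp [Matrix.trace, Matrix.diag, Matrix.mul_apply, conjTranspose_apply,
      Complex.normSq_eq_conj_mul_self]
  rw [ht] at h
  have h2 : (∑ j, ∑ i, Complex.normSq (A i j) : ℝ) = 0 := by exact_mod_cast h
  have h3 : ∀ j ∈ Finset.univ, ∀ i ∈ Finset.univ, Complex.normSq (A i j) = 0 := by
    have := (Finset.sum_eq_zero_iff_of_nonneg (fun j _ =>
      Finset.sum_nonneg fun i _ => Complex.normSq_nonneg _)).mp h2
    intro j hj i hi
    exact (Finset.sum_eq_zero_iff_of_nonneg (fun i _ => Complex.normSq_nonneg _)).mp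
      (this j hj) i hi
  ext i j
  simpa using Complex.normSq_eq_zero.mp (h3 j (Finset.mem_univ _) i (Finset.mem_univ _))

lemma psdMulPsdTraceNonneg {P Q : Matrix n n ℂ} (hP : P.PosSemidef) (hQ : Q.PosSemidef) :
    0 ≤ (P * Q).trace := by
  have h1 : (hP.sqrtᴴ * Q * hP.sqrt).trace = (P * Q).trace := by
    rw [Matrix.trace_mul_cycle, hP.posSemidef_sqrt.1, hP.sqrt_mul_self]
  rw [← h1]
  exact psdTraceNonneg (hQ.conjTranspose_mul_mul_same _)

lemma psdMulPsdZero {P Q : Matrix n n ℂ} (hP : P.PosSemidef) (hQ : Q.PosSemidef)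
    (h : (P * Q).trace = 0) : P * Q = 0 := by
  have hST : hP.sqrt * hQ.sqrt = 0 := by
    apply traceCTmulself
    have e : (hP.sqrt * hQ.sqrt)ᴴ * (hP.sqrt * hQ.sqrt) = hQ.sqrt * P * hQ.sqrt := by
      rw [conjTranspose_mul, hP.posSemidef_sqrt.1, hQ.posSemidef_sqrt.1,
        Matrix.mul_assoc, ← Matrix.mul_assoc hP.sqrt hP.sqrt, hP.sqrt_mul_self,
        ← Matrix.mul_assoc]
    have etr : (hQ.sqrt * P * hQ.sqrt).trace = 0 := by
      rw [Matrix.trace_mul_cycle, hQ.sqrt_mul_self, Matrix.trace_mul_comm]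
      exact h
    rw [e, etr]
  rw [← hP.sqrt_mul_self, ← hQ.sqrt_mul_self, Matrix.mul_assoc,
    ← Matrix.mul_assoc hP.sqrt hQ.sqrt hQ.sqrt, hST, Matrix.zero_mul, Matrix.mul_zero]

/-- If `1 - M ⪰ 0`, `ρ ⪰ 0` and `tr(Mρ) = tr ρ`, then `Mρ = ρ`. -/
lemma fixedOfTrace {M ρ : Matrix n n ℂ} (hρ : ρ.PosSemidef)
    (h1 : ((1 : Matrix n n ℂ) - M).PosSemidef)
    (h : (M * ρ).trace = ρ.trace) : M * ρ = ρ := by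
  have h0 : (((1 : Matrix n n ℂ) - M) * ρ).trace = 0 := by
    rw [Matrix.sub_mul, Matrix.one_mul, Matrix.trace_sub, h, sub_self]
  have := psdMulPsdZero h1 hρ h0
  rw [Matrix.sub_mul, Matrix.one_mul, sub_eq_zero] at this
  exact this.symm



set_option linter.unusedSectionVars false



lemma obsSqPSD {P0 P1 : Matrix n n ℂ} (h0 : P0.IsHermitian) (h1 : P1.IsHermitian) :
    ((P0 - P1) * (P0 - P1)).PosSemidef := by
  have hH : (P0 - P1)ᴴ = P0 - P1 := h0.sub h1
  nth_rewrite 1 [← hH]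
  exact Matrix.posSemidef_conjTranspose_mul_self _

lemma povmSq {P0 P1 : Matrix n n ℂ} (h0 : P0.PosSemidef) (h1 : P1.PosSemidef)
    (hsum : P0 + P1 = 1) :
    ((1 : Matrix n n ℂ) - (P0 - P1) * (P0 - P1)).PosSemidef := by
  have hP0 : P0 = 1 - P1 := by rw [← hsum]; abel
  obtain ⟨S, hSH, hSS⟩ : ∃ S : Matrix n n ℂ, Sᴴ = S ∧ S * S = P1 :=
    ⟨h1.sqrt, h1.posSemidef_sqrt.1, h1.sqrt_mul_self⟩
  have comm : S * P0 = P0 * S := by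
    rw [hP0, ← hSS, Matrix.mul_sub, Matrix.sub_mul, Matrix.mul_one, Matrix.one_mul,
      Matrix.mul_assoc]
  have hpsd : (P1 * P0).PosSemidef := by
    have e : Sᴴ * P0 * S = P1 * P0 := by
      rw [hSH, Matrix.mul_assoc, ← comm, ← Matrix.mul_assoc, hSS]
    have := h0.conjTranspose_mul_mul_same S
    rwa [e] at this
  have key : (1 : Matrix n n ℂ) - (P0 - P1) * (P0 - P1) =
      P1 * P0 + P1 * P0 + (P1 * P0 + P1 * P0) := by
    rw [hP0]
    noncomm_ring
  rw [key]
  exact (hpsd.add hpsd).add (hpsd.add hpsd)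

lemma quantum_corr_aux {dA dB : ℕ}
    (ρ : Matrix (Fin dA × Fin dB) (Fin dA × Fin dB) ℂ)
    (A : Fin 2 → Matrix (Fin dA) (Fin dA) ℂ)
    (B : Fin 2 → Matrix (Fin dB) (Fin dB) ℂ)
    (hρ : ρ.PosSemidef) (hρtr : ρ.trace = 1)
    (hAH : ∀ x, (A x).IsHermitian) (hBH : ∀ y, (B y).IsHermitian)
    (hApm : ∀ x y, ((1 : Matrix (Fin dA × Fin dB) (Fin dA × Fin dB) ℂ) - A x ⊗ₖ B y).PosSemidef)
    (hA2 : ∀ x, ((1 : Matrix (Fin dA) (Fin dA) ℂ) - A x * A x).PosSemidef)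
    (hB2 : ∀ y, ((1 : Matrix (Fin dB) (Fin dB) ℂ) - B y * B y).PosSemidef)
    (hB2p : ∀ y, (B y * B y).PosSemidef)
    (c : Fin 2 → Fin 2 → ℝ)
    (hcor : ∀ x y, ((A x ⊗ₖ B y) * ρ).trace = (c x y : ℂ))
    (h00 : c 0 0 = 1) (h11 : c 1 1 = 1) : c 0 1 = c 1 0 := by
  have hfix : ∀ x y, c x y = 1 → (A x ⊗ₖ B y) * ρ = ρ := by
    intro x y hxy
    refine fixedOfTrace hρ (hApm x y) ?_
    rw [hcor x y, hxy, hρtr]; norm_num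
  have h00f := hfix 0 0 h00
  have h11f := hfix 1 1 h11
  -- (1 ⊗ B y²) ρ = ρ whenever (A x ⊗ B y) ρ = ρ
  have hBsq : ∀ x y, (A x ⊗ₖ B y) * ρ = ρ →
      ((1 : Matrix (Fin dA) (Fin dA) ℂ) ⊗ₖ (B y * B y)) * ρ = ρ := by
    intro x y hfixxy
    have hsq : ((A x * A x) ⊗ₖ (B y * B y)) * ρ = ρ := by
      rw [Matrix.mul_kronecker_mul, Matrix.mul_assoc, hfixxy, hfixxy]
    set M := (1 : Matrix (Fin dA) (Fin dA) ℂ) ⊗ₖ (B y * B y) with hMdef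
    have hMup : ((1 : Matrix (Fin dA × Fin dB) (Fin dA × Fin dB) ℂ) - M).PosSemidef := by
      rw [hMdef, ← Matrix.one_kronecker_one, ← kronSub]
      exact kronPSD Matrix.PosSemidef.one (hB2 y)
    have hlow : 0 ≤ ((M - (A x * A x) ⊗ₖ (B y * B y)) * ρ).trace := by
      have hdiff : M - (A x * A x) ⊗ₖ (B y * B y) =
          ((1 : Matrix (Fin dA) (Fin dA) ℂ) - A x * A x) ⊗ₖ (B y * B y) := by
        rw [subKron, hMdef]
      rw [hdiff]
      exact psdMulPsdTraceNonneg (kronPSD (hA2 x) (hB2p y)) hρ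
    have hup : 0 ≤ (((1 : Matrix (Fin dA × Fin dB) (Fin dA × Fin dB) ℂ) - M) * ρ).trace := by
      exact psdMulPsdTraceNonneg hMup hρ
    have htr : (M * ρ).trace = ρ.trace := by
      rw [Matrix.sub_mul, Matrix.trace_sub, hsq, hρtr] at hlow
      rw [Matrix.sub_mul, Matrix.one_mul, Matrix.trace_sub] at hup
      have l1 : (1 : ℂ) ≤ (M * ρ).trace := by rwa [sub_nonneg] at hlow
      have l2 : (M * ρ).trace ≤ ρ.trace := by rwa [sub_nonneg] at hup
      rw [hρtr]
      exact le_antisymm (hρtr ▸ l2) l1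
    exact fixedOfTrace hρ hMup htr
  have hB0sq := hBsq 0 0 h00f
  have hB1sq := hBsq 1 1 h11f
  have split : ∀ (X : Matrix (Fin dA) (Fin dA) ℂ) (Y : Matrix (Fin dB) (Fin dB) ℂ),
      (X ⊗ₖ Y) * ρ = (X ⊗ₖ (1 : Matrix (Fin dB) (Fin dB) ℂ)) *
        (((1 : Matrix (Fin dA) (Fin dA) ℂ) ⊗ₖ Y) * ρ) := by
    intro X Y
    rw [← Matrix.mul_assoc, ← Matrix.mul_kronecker_mul, Matrix.mul_one, Matrix.one_mul]
  have h00r : ρ * (A 0 ⊗ₖ B 0) = ρ := by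
    have := congrArg conjTranspose h00f
    rwa [Matrix.conjTranspose_mul, hρ.1, kronCT, (hAH 0), (hBH 0)] at this
  have e1 : (c 0 1 : ℂ) = (((A 0 * A 1) ⊗ₖ (1 : Matrix (Fin dB) (Fin dB) ℂ)) * ρ).trace := by
    calc (c 0 1 : ℂ) = ((A 0 ⊗ₖ B 1) * ((A 1 ⊗ₖ B 1) * ρ)).trace := by rw [h11f, ← hcor 0 1]
      _ = (((A 0 * A 1) ⊗ₖ (B 1 * B 1)) * ρ).trace := by
            rw [← Matrix.mul_assoc, ← Matrix.mul_kronecker_mul]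
      _ = (((A 0 * A 1) ⊗ₖ (1 : Matrix (Fin dB) (Fin dB) ℂ)) *
            ((((1 : Matrix (Fin dA) (Fin dA) ℂ)) ⊗ₖ (B 1 * B 1)) * ρ)).trace := by rw [← split]
      _ = _ := by rw [hB1sq]
  have e2 : (c 1 0 : ℂ) = (((A 0 * A 1) ⊗ₖ (1 : Matrix (Fin dB) (Fin dB) ℂ)) * ρ).trace := by
    calc (c 1 0 : ℂ) = ((A 1 ⊗ₖ B 0) * (ρ * (A 0 ⊗ₖ B 0))).trace := by rw [h00r, ← hcor 1 0]
      _ = ((A 0 ⊗ₖ B 0) * ((A 1 ⊗ₖ B 0) * ρ)).trace := by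
            rw [← Matrix.mul_assoc, Matrix.trace_mul_comm, ← Matrix.mul_assoc]
      _ = (((A 0 * A 1) ⊗ₖ (B 0 * B 0)) * ρ).trace := by
            rw [← Matrix.mul_assoc, ← Matrix.mul_kronecker_mul]
      _ = (((A 0 * A 1) ⊗ₖ (1 : Matrix (Fin dB) (Fin dB) ℂ)) *
            ((((1 : Matrix (Fin dA) (Fin dA) ℂ)) ⊗ₖ (B 0 * B 0)) * ρ)).trace := by rw [← split]
      _ = _ := by rw [hB0sq]
  have := e1.trans e2.symm
  exact_mod_cast this

end Helpers

/-- Tsirelson-type constraint on the correlators of a two-input two-output quantum box: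
if `c₀₀ = c₁₁ = 1` then `c₀₁ = c₁₀`; in particular, a quantum box with
`p(0,1|0,0) = p(1,0|0,0) = p(0,1|1,1) = p(1,0|1,1) = 0` satisfies
`p(0,1|0,1) - p(0,1|1,0) = p(0,0|0,0) - p(0,0|1,1)`. -/
theorem quantum_correlator_constraint
    (p : Fin 2 → Fin 2 → Fin 2 → Fin 2 → ℝ)
    (hbox : IsBox p) (hq : IsQuantum p)
    (c : Fin 2 → Fin 2 → ℝ)
    (hc : ∀ x y, c x y = p 0 0 x y + p 1 1 x y - p 0 1 x y - p 1 0 x y) :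
    ((c 0 0 = 1 ∧ c 1 1 = 1) → c 0 1 = c 1 0) ∧
    ((p 0 1 0 0 = 0 ∧ p 1 0 0 0 = 0 ∧ p 0 1 1 1 = 0 ∧ p 1 0 1 1 = 0) →
      p 0 1 0 1 - p 0 1 1 0 = p 0 0 0 0 - p 0 0 1 1) := by

  obtain ⟨hb1, hb2⟩ := hbox
  obtain ⟨dA, dB, hdA, hdB, ρ, E, F, hρ, hρtr, hE, hEsum, hF, hFsum, hfeed⟩ := hq
  have hEone : ∀ x, E x 0 + E x 1 = 1 := fun x => by
    have := hEsum x; rwa [Fin.sum_univ_two] at this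
  have hFone : ∀ y, F y 0 + F y 1 = 1 := fun y => by
    have := hFsum y; rwa [Fin.sum_univ_two] at this
  have hcor : ∀ x y, (((E x 0 - E x 1) ⊗ₖ (F y 0 - F y 1)) * ρ).trace = (c x y : ℂ) := by
    intro x y
    have hk : (E x 0 - E x 1) ⊗ₖ (F y 0 - F y 1) =
        E x 0 ⊗ₖ F y 0 - E x 0 ⊗ₖ F y 1 - (E x 1 ⊗ₖ F y 0 - E x 1 ⊗ₖ F y 1) := by
      rw [subKron, kronSub, kronSub]
    rw [hk, hc]
    simp only [Matrix.sub_mul, Matrix.trace_sub, hfeed]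
    push_cast
    ring
  have hApm : ∀ x y, ((1 : Matrix (Fin dA × Fin dB) (Fin dA × Fin dB) ℂ) -
      (E x 0 - E x 1) ⊗ₖ (F y 0 - F y 1)).PosSemidef := by
    intro x y
    have hk : (1 : Matrix (Fin dA × Fin dB) (Fin dA × Fin dB) ℂ) -
        (E x 0 - E x 1) ⊗ₖ (F y 0 - F y 1) =
        E x 0 ⊗ₖ F y 1 + E x 1 ⊗ₖ F y 0 + (E x 0 ⊗ₖ F y 1 + E x 1 ⊗ₖ F y 0) := by
      have h1 : (1 : Matrix (Fin dA × Fin dB) (Fin dA × Fin dB) ℂ) =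
          (E x 0 + E x 1) ⊗ₖ (F y 0 + F y 1) := by
        rw [hEone, hFone, Matrix.one_kronecker_one]
      rw [h1, Matrix.add_kronecker, Matrix.kronecker_add, Matrix.kronecker_add,
        subKron, kronSub, kronSub]
      abel
    rw [hk]
    exact ((kronPSD (hE x 0) (hF y 1)).add (kronPSD (hE x 1) (hF y 0))).add
      ((kronPSD (hE x 0) (hF y 1)).add (kronPSD (hE x 1) (hF y 0)))
  have main : (c 0 0 = 1 ∧ c 1 1 = 1) → c 0 1 = c 1 0 := by
    rintro ⟨h00, h11⟩
    exact quantum_corr_aux ρ (fun x => E x 0 - E x 1) (fun y => F y 0 - F y 1)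
      hρ hρtr (fun x => (hE x 0).1.sub (hE x 1).1) (fun y => (hF y 0).1.sub (hF y 1).1)
      hApm (fun x => povmSq (hE x 0) (hE x 1) (hEone x))
      (fun y => povmSq (hF y 0) (hF y 1) (hFone y))
      (fun y => obsSqPSD (hF y 0).1 (hF y 1).1) c hcor h00 h11
  refine ⟨main, ?_⟩
  rintro ⟨z1, z2, z3, z4⟩
  -- no-signaling marginals from the quantum representation
  have margA : ∀ (a : Fin 2) (x y y' : Fin 2),
      p a 0 x y + p a 1 x y = p a 0 x y' + p a 1 x y' := by
    intro a x y y'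
    have key : ∀ y : Fin 2, ((p a 0 x y + p a 1 x y : ℝ) : ℂ) =
        ((E x a ⊗ₖ (1 : Matrix (Fin dB) (Fin dB) ℂ)) * ρ).trace := by
      intro y
      have h1 : E x a ⊗ₖ (1 : Matrix (Fin dB) (Fin dB) ℂ) =
          E x a ⊗ₖ F y 0 + E x a ⊗ₖ F y 1 := by
        rw [← Matrix.kronecker_add, hFone]
      rw [h1, Matrix.add_mul, Matrix.trace_add, hfeed, hfeed]
      push_cast; ring
    exact_mod_cast (key y).trans (key y').symm
  have margB : ∀ (b : Fin 2) (y x x' : Fin 2),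
      p 0 b x y + p 1 b x y = p 0 b x' y + p 1 b x' y := by
    intro b y x x'
    have key : ∀ x : Fin 2, ((p 0 b x y + p 1 b x y : ℝ) : ℂ) =
        (((1 : Matrix (Fin dA) (Fin dA) ℂ) ⊗ₖ F y b) * ρ).trace := by
      intro x
      have h1 : (1 : Matrix (Fin dA) (Fin dA) ℂ) ⊗ₖ F y b =
          E x 0 ⊗ₖ F y b + E x 1 ⊗ₖ F y b := by
        rw [← Matrix.add_kronecker, hEone]
      rw [h1, Matrix.add_mul, Matrix.trace_add, hfeed, hfeed]
      push_cast; ring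
    exact_mod_cast (key x).trans (key x').symm
  have n00 := hb2 0 0
  have n11 := hb2 1 1
  have n01 := hb2 0 1
  have n10 := hb2 1 0
  simp only [Fin.sum_univ_two] at n00 n11 n01 n10
  have hceq : c 0 1 = c 1 0 := by
    refine main ⟨?_, ?_⟩
    · rw [hc]; linarith
    · rw [hc]; linarith
  have e01 := hc 0 1
  have e10 := hc 1 0
  have mA1 := margA 0 0 0 1
  have mA2 := margA 0 1 1 0
  have mB1 := margB 0 1 0 1
  have mB2 := margB 0 0 1 0
  linarith
end

section
/- Let p(a,b|x,y), a,b,x,y ∈ {0,1}, be a family of nonnegative real numbers with Σ_{a,b} p(a,b|x,y) = 1 for every x,y. Then p is no-signaling if and only if there exists a function P : {0,1}⁴ → ℝ (a quasi-probability distribution over instruction sets ω_{a₀a₁b₀b₁}, allowed to take negative values) such that for all a,b,x,y: Σ over all (a₀,a₁,b₀,b₁) with a_x = a and b_y = b of P(a₀,a₁,b₀,b₁) equals p(a,b|x,y). -/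
open Kronecker ComplexOrder

private lemma quasi_sum_eval (P : Fin 2 → Fin 2 → Fin 2 → Fin 2 → ℝ) (a b x y : Fin 2) :
    (∑ a0, ∑ a1, ∑ b0, ∑ b1,
      if (![a0, a1] x = a ∧ ![b0, b1] y = b) then P a0 a1 b0 b1 else 0)
    = ∑ u, ∑ v, P (if x = 0 then a else u) (if x = 0 then u else a)
        (if y = 0 then b else v) (if y = 0 then v else b) := by
  fin_cases x <;> fin_cases y <;> fin_cases a <;> fin_cases b <;>
    simp [Fin.sum_univ_two]

set_option maxHeartbeats 4000000 in
/-- Proposition A1 of the paper (with its converse): a two-input two-output box is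
no-signaling iff it admits a quasi-probability ontological model over instruction sets
`ω_{a₀a₁b₀b₁}` (real weights, possibly negative) reproducing its statistics. -/
theorem nosignaling_iff_quasiprobability_model
    (p : Fin 2 → Fin 2 → Fin 2 → Fin 2 → ℝ)
    (hbox : IsBox p) :
    NoSignaling p ↔
      ∃ P : Fin 2 → Fin 2 → Fin 2 → Fin 2 → ℝ,
        ∀ a b x y,
          (∑ a0, ∑ a1, ∑ b0, ∑ b1,
            if (![a0, a1] x = a ∧ ![b0, b1] y = b) then P a0 a1 b0 b1 else 0)
          = p a b x y := by
  obtain ⟨hpos, hnorm⟩ := hbox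
  have hn : ∀ x y : Fin 2, p 0 0 x y + p 0 1 x y + p 1 0 x y + p 1 1 x y = 1 := by
    intro x y; have := hnorm x y; simp [Fin.sum_univ_two] at this; linarith
  constructor
  · rintro ⟨hA, hB⟩
    have hA' : ∀ b y x x' : Fin 2, p 0 b x y + p 1 b x y = p 0 b x' y + p 1 b x' y := by
      intro b y x x'; have := hA b y x x'; simpa [Fin.sum_univ_two] using this
    have hB' : ∀ a x y y' : Fin 2, p a 0 x y + p a 1 x y = p a 0 x y' + p a 1 x y' := by
      intro a x y y'; have := hB a x y y'; simpa [Fin.sum_univ_two] using this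
    refine ⟨fun a0 a1 b0 b1 =>
      (1 + (![1,-1] a0 : ℝ) * (p 0 0 0 0 + p 0 1 0 0 - p 1 0 0 0 - p 1 1 0 0)
         + (![1,-1] a1 : ℝ) * (p 0 0 1 0 + p 0 1 1 0 - p 1 0 1 0 - p 1 1 1 0)
         + (![1,-1] b0 : ℝ) * (p 0 0 0 0 + p 1 0 0 0 - p 0 1 0 0 - p 1 1 0 0)
         + (![1,-1] b1 : ℝ) * (p 0 0 0 1 + p 1 0 0 1 - p 0 1 0 1 - p 1 1 0 1)
         + (![1,-1] a0 : ℝ) * (![1,-1] b0 : ℝ) * (p 0 0 0 0 - p 0 1 0 0 - p 1 0 0 0 + p 1 1 0 0)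
         + (![1,-1] a0 : ℝ) * (![1,-1] b1 : ℝ) * (p 0 0 0 1 - p 0 1 0 1 - p 1 0 0 1 + p 1 1 0 1)
         + (![1,-1] a1 : ℝ) * (![1,-1] b0 : ℝ) * (p 0 0 1 0 - p 0 1 1 0 - p 1 0 1 0 + p 1 1 1 0)
         + (![1,-1] a1 : ℝ) * (![1,-1] b1 : ℝ) * (p 0 0 1 1 - p 0 1 1 1 - p 1 0 1 1 + p 1 1 1 1)) / 16, ?_⟩
    intro a b x y
    rw [quasi_sum_eval]
    fin_cases x <;> fin_cases y <;> fin_cases a <;> fin_cases b <;>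
      norm_num [Fin.sum_univ_two] <;>
      linarith [hn 0 0, hn 0 1, hn 1 0, hn 1 1,
        hA' 0 0 0 1, hA' 0 1 0 1, hA' 1 0 0 1, hA' 1 1 0 1,
        hB' 0 0 0 1, hB' 0 1 0 1, hB' 1 0 0 1, hB' 1 1 0 1]
  · rintro ⟨P, h⟩
    constructor
    · intro b y x x'
      simp only [Fin.sum_univ_two]
      rw [← h 0 b x y, ← h 1 b x y, ← h 0 b x' y, ← h 1 b x' y]
      fin_cases b <;> fin_cases y <;> fin_cases x <;> fin_cases x' <;>
        simp [Fin.sum_univ_two] <;> ring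
    · intro a x y y'
      simp only [Fin.sum_univ_two]
      rw [← h a 0 x y, ← h a 1 x y, ← h a 0 x y', ← h a 1 x y']
      fin_cases a <;> fin_cases x <;> fin_cases y <;> fin_cases y' <;>
        simp [Fin.sum_univ_two] <;> ring
end
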